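/- Let η, φ : I → I be reparametrizations. There exists a reparametrization ψ : I → I with η = φ ∘ ψ if and only if C_φ ⊆ C_η, where C_φ and C_η denote the sets of stop values of φ and η. -/

import Mathlib

open unitInterval

/-- `φ` is a reparametrization of the unit interval: a continuous weakly
increasing self-map of `I` with `φ 0 = 0` and `φ 1 = 1` (such a map is
automatically surjective). -/
def IsRepar (φ : I → I) : Prop :=
  Continuous φ ∧ Monotone φ ∧ φ 0 = 0 ∧ φ 1 = 1

/-- `p` is constant on the closed subinterval `[a, b]` of `I`. -/
def ConstOn {X : Type*} (p : I → X) (a b : I) : Prop :=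
  ∀ s ∈ Set.Icc a b, ∀ t ∈ Set.Icc a b, p s = p t

/-- `[a, b]` is a `p`-stop interval: a nondegenerate closed subinterval of `I`
on which `p` is constant, maximal (w.r.t. inclusion) among nondegenerate closed
subintervals on which `p` is constant. -/
def IsStopInterval {X : Type*} (p : I → X) (a b : I) : Prop :=
  a < b ∧ ConstOn p a b ∧
    ∀ a' b' : I, a' ≤ a → b ≤ b' → ConstOn p a' b' → a' = a ∧ b' = b

/-- The set `C_p` of `p`-stop values: the constant values taken by `p`
on its stop intervals. -/
def StopValues {X : Type*} (p : I → X) : Set X :=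
  {c | ∃ a b : I, IsStopInterval p a b ∧ p a = c}

instance : Fact ((0:ℝ) ≤ 1) := ⟨zero_le_one⟩

/-- Left endpoint of the level set of `p` at `c`. -/
noncomputable def lv (p : I → I) (c : I) : I := sInf {s | p s = c}

/-- Right endpoint of the level set of `p` at `c`. -/
noncomputable def uv (p : I → I) (c : I) : I := sSup {s | p s = c}

lemma repar_surjective {p : I → I} (hp : IsRepar p) : Function.Surjective p := by
  intro y
  have h01 : (0:I) ≤ 1 := nonneg'
  have := intermediate_value_Icc h01 hp.1.continuousOn
  have hy : y ∈ Set.Icc (p 0) (p 1) := by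
    rw [hp.2.2.1, hp.2.2.2]; exact ⟨nonneg', le_one'⟩
  obtain ⟨x, -, hx⟩ := this hy
  exact ⟨x, hx⟩

lemma lv_spec {p : I → I} (hp : IsRepar p) (c : I) : p (lv p c) = c :=
  (isClosed_eq hp.1 continuous_const).sInf_mem (repar_surjective hp c)

lemma uv_spec {p : I → I} (hp : IsRepar p) (c : I) : p (uv p c) = c :=
  (isClosed_eq hp.1 continuous_const).sSup_mem (repar_surjective hp c)

lemma lv_le {p : I → I} {c s : I} (h : p s = c) : lv p c ≤ s := sInf_le h

lemma le_uv {p : I → I} {c s : I} (h : p s = c) : s ≤ uv p c := le_sSup h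

lemma level_iff {p : I → I} (hp : IsRepar p) {c s : I} :
    p s = c ↔ lv p c ≤ s ∧ s ≤ uv p c := by
  refine ⟨fun h => ⟨lv_le h, le_uv h⟩, fun ⟨h1, h2⟩ => ?_⟩
  have hl := hp.2.1 h1
  have hr := hp.2.1 h2
  rw [lv_spec hp] at hl
  rw [uv_spec hp] at hr
  exact le_antisymm hr hl

lemma uv_lt_lv {p : I → I} (hp : IsRepar p) {c c' : I} (h : c < c') :
    uv p c < lv p c' := by
  by_contra hle
  push_neg at hle
  have := hp.2.1 hle
  rw [lv_spec hp, uv_spec hp] at this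
  exact absurd this (not_le.2 h)

lemma stopValues_char {p : I → I} (hp : IsRepar p) (c : I) :
    c ∈ StopValues p ↔ lv p c < uv p c := by
  constructor
  · rintro ⟨a, b, ⟨hab, hconst, -⟩, hpa⟩
    have hpb : p b = c :=
      (hconst b ⟨hab.le, le_refl b⟩ a ⟨le_refl a, hab.le⟩).trans hpa
    exact lt_of_le_of_lt (lv_le hpa) (lt_of_lt_of_le hab (le_uv hpb))
  · intro h
    refine ⟨lv p c, uv p c, ⟨h, ?_, ?_⟩, lv_spec hp c⟩
    · intro s hs t ht
      rw [(level_iff hp).2 ⟨hs.1, hs.2⟩, (level_iff hp).2 ⟨ht.1, ht.2⟩]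
    · intro a' b' ha' hb' hconst
      have h1 : p a' = c := by
        have := hconst a' ⟨le_refl _, ha'.trans (h.le.trans hb')⟩
          (lv p c) ⟨ha', h.le.trans hb'⟩
        rw [this, lv_spec hp]
      have h2 : p b' = c := by
        have := hconst b' ⟨ha'.trans (h.le.trans hb'), le_refl _⟩
          (uv p c) ⟨ha'.trans h.le, hb'⟩
        rw [this, uv_spec hp]
      exact ⟨le_antisymm ha' (lv_le h1), le_antisymm (le_uv h2) hb'⟩

/-- The candidate factorization map, as a real-valued function: on the
level intervals of `η` it traverses the corresponding level interval of `φ`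
linearly; elsewhere it is the minimal preimage. -/
noncomputable def psiAux (η φ : I → I) (t : I) : ℝ :=
  if lv η (η t) < uv η (η t) then
    (lv φ (η t) : ℝ) +
      (((t : ℝ) - lv η (η t)) / ((uv η (η t) : ℝ) - lv η (η t))) *
        ((uv φ (η t) : ℝ) - lv φ (η t))
  else (lv φ (η t) : ℝ)

lemma psiAux_mem {η φ : I → I} (hη : IsRepar η) (hφ : IsRepar φ) (t : I) :
    (lv φ (η t) : ℝ) ≤ psiAux η φ t ∧ psiAux η φ t ≤ (uv φ (η t) : ℝ) := by
  have hFG : (lv φ (η t) : ℝ) ≤ uv φ (η t) := Subtype.coe_le_coe.2 (lv_le (uv_spec hφ _))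
  unfold psiAux
  split_ifs with h
  · have hut : (lv η (η t) : ℝ) ≤ t := Subtype.coe_le_coe.2 (lv_le rfl)
    have htv : (t : ℝ) ≤ uv η (η t) := Subtype.coe_le_coe.2 (le_uv rfl)
    have huv : (lv η (η t) : ℝ) < uv η (η t) := Subtype.coe_lt_coe.2 h
    have hr0 : 0 ≤ ((t:ℝ) - lv η (η t)) / ((uv η (η t):ℝ) - lv η (η t)) :=
      div_nonneg (by linarith) (by linarith)
    have hr1 : ((t:ℝ) - lv η (η t)) / ((uv η (η t):ℝ) - lv η (η t)) ≤ 1 :=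
      (div_le_one (by linarith)).2 (by linarith)
    constructor <;> nlinarith
  · exact ⟨le_refl _, hFG⟩

lemma backward {η φ : I → I} (hη : IsRepar η) (hφ : IsRepar φ)
    (key : ∀ c : I, lv φ c < uv φ c → lv η c < uv η c) :
    ∃ ψ : I → I, IsRepar ψ ∧ η = φ ∘ ψ := by
  set ψ : I → I := fun t => Set.projIcc (0:ℝ) 1 zero_le_one (psiAux η φ t) with hψdef
  have hcoe : ∀ t, (ψ t : ℝ) = psiAux η φ t := by
    intro t
    have hmem := psiAux_mem hη hφ t
    have hIcc : psiAux η φ t ∈ Set.Icc (0:ℝ) 1 :=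
      ⟨le_trans (lv φ (η t)).2.1 hmem.1, le_trans hmem.2 (uv φ (η t)).2.2⟩
    simp only [hψdef]
    rw [Set.projIcc_of_mem _ hIcc]
  have hbound : ∀ t, lv φ (η t) ≤ ψ t ∧ ψ t ≤ uv φ (η t) := by
    intro t
    have hmem := psiAux_mem hη hφ t
    constructor
    · exact Subtype.coe_le_coe.1 (by rw [hcoe]; exact hmem.1)
    · exact Subtype.coe_le_coe.1 (by rw [hcoe]; exact hmem.2)
  have hfac : ∀ t, φ (ψ t) = η t := fun t => (level_iff hφ).2 (hbound t)
  have hmono : Monotone ψ := by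
    intro t₁ t₂ hle
    rcases eq_or_lt_of_le (hη.2.1 hle) with hc | hc
    · rw [← Subtype.coe_le_coe, hcoe, hcoe]
      unfold psiAux
      rw [hc]
      split_ifs with h
      · have huv : (lv η (η t₂) : ℝ) < uv η (η t₂) := Subtype.coe_lt_coe.2 h
        have hFG : (lv φ (η t₂) : ℝ) ≤ uv φ (η t₂) :=
          Subtype.coe_le_coe.2 (lv_le (uv_spec hφ _))
        have h12 : (t₁:ℝ) ≤ t₂ := Subtype.coe_le_coe.2 hle
        have hstep : ((t₁:ℝ) - lv η (η t₂)) / ((uv η (η t₂):ℝ) - lv η (η t₂)) ≤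
            ((t₂:ℝ) - lv η (η t₂)) / ((uv η (η t₂):ℝ) - lv η (η t₂)) := by
          apply div_le_div_of_nonneg_right <;> linarith
        exact add_le_add (le_refl _) (mul_le_mul_of_nonneg_right hstep (sub_nonneg.2 hFG))
      · exact le_refl _
    · exact le_of_lt (lt_of_le_of_lt (hbound t₁).2
        (lt_of_lt_of_le (uv_lt_lv hφ hc) (hbound t₂).1))
  have hψ0 : ψ 0 = 0 := by
    have hη0 : η 0 = 0 := hη.2.2.1
    have hu0 : lv η 0 = 0 := le_antisymm (lv_le hη0) nonneg'
    have hF0 : lv φ 0 = 0 := le_antisymm (lv_le hφ.2.2.1) nonneg'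
    apply Subtype.ext
    rw [hcoe]
    unfold psiAux
    rw [hη0, hu0, hF0]
    split_ifs with h
    · norm_num
    · norm_num
  have hψ1 : ψ 1 = 1 := by
    have hη1 : η 1 = 1 := hη.2.2.2
    have hv1 : uv η 1 = 1 := le_antisymm le_one' (le_uv hη1)
    have hG1 : uv φ 1 = 1 := le_antisymm le_one' (le_uv hφ.2.2.2)
    apply Subtype.ext
    rw [hcoe]
    unfold psiAux
    rw [hη1, hv1, hG1]
    split_ifs with h
    · have hlt : (lv η 1 : ℝ) < 1 := by
        have := Subtype.coe_lt_coe.2 h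
        simpa using this
      have hne : ((1:I):ℝ) - (lv η 1 : ℝ) ≠ 0 := by
        simp only [Set.Icc.coe_one]
        intro hcontra; linarith
      rw [div_self hne]
      simp
    · have hu1 : lv η 1 = 1 := le_antisymm le_one' (not_lt.1 h)
      have hnφ : ¬ lv φ 1 < uv φ 1 := by
        intro hcon
        have := key 1 hcon
        rw [hu1, hv1] at this
        exact lt_irrefl _ this
      have hF1 : lv φ 1 = 1 := by
        rw [hG1] at hnφ
        exact le_antisymm le_one' (by
          have := not_lt.1 hnφ
          exact this)
      rw [hF1]
  have hsurj : Function.Surjective ψ := by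
    intro s
    set c := φ s with hc
    have hFs : lv φ c ≤ s := lv_le hc.symm
    have hsG : s ≤ uv φ c := le_uv hc.symm
    by_cases hFG : lv φ c < uv φ c
    · have huv := key c hFG
      have huvR : (lv η c : ℝ) < uv η c := Subtype.coe_lt_coe.2 huv
      have hFGR : (lv φ c : ℝ) < uv φ c := Subtype.coe_lt_coe.2 hFG
      have hFsR : (lv φ c : ℝ) ≤ s := Subtype.coe_le_coe.2 hFs
      have hsGR : (s : ℝ) ≤ uv φ c := Subtype.coe_le_coe.2 hsG
      set r : ℝ := ((s:ℝ) - lv φ c) / ((uv φ c : ℝ) - lv φ c) with hr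
      have hr0 : 0 ≤ r := div_nonneg (by linarith) (by linarith)
      have hr1 : r ≤ 1 := (div_le_one (by linarith)).2 (by linarith)
      set treal : ℝ := (lv η c : ℝ) + r * ((uv η c : ℝ) - lv η c) with htreal
      have htu : (lv η c : ℝ) ≤ treal := by nlinarith
      have htv : treal ≤ (uv η c : ℝ) := by nlinarith
      have htI : treal ∈ Set.Icc (0:ℝ) 1 :=
        ⟨le_trans (lv η c).2.1 htu, le_trans htv (uv η c).2.2⟩
      set t : I := ⟨treal, htI⟩ with ht
      have htu' : lv η c ≤ t := Subtype.coe_le_coe.1 htu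
      have htv' : t ≤ uv η c := Subtype.coe_le_coe.1 htv
      have hηt : η t = c := (level_iff hη).2 ⟨htu', htv'⟩
      refine ⟨t, ?_⟩
      apply Subtype.ext
      rw [hcoe]
      unfold psiAux
      rw [hηt, if_pos huv]
      have hvu : (uv η c : ℝ) - lv η c ≠ 0 := sub_ne_zero.2 (ne_of_gt huvR)
      have hGF : (uv φ c : ℝ) - lv φ c ≠ 0 := sub_ne_zero.2 (ne_of_gt hFGR)
      have h1 : (t : ℝ) - lv η c = r * ((uv η c : ℝ) - lv η c) := by
        show treal - (lv η c : ℝ) = _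
        rw [htreal]; ring
      rw [h1, mul_div_assoc, div_self hvu, mul_one, hr,
        div_mul_cancel₀ _ hGF]
      ring
    · have hFG' : lv φ c = uv φ c := le_antisymm (lv_le (uv_spec hφ c)) (not_lt.1 hFG)
      have hs : s = lv φ c := le_antisymm (by rw [hFG']; exact hsG) hFs
      refine ⟨lv η c, ?_⟩
      have hηu : η (lv η c) = c := lv_spec hη c
      apply Subtype.ext
      rw [hcoe]
      unfold psiAux
      rw [hηu]
      have hGFr : (uv φ c : ℝ) = lv φ c := by
        exact_mod_cast congrArg Subtype.val hFG'.symm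
      have hsr : (s : ℝ) = lv φ c := by
        exact_mod_cast congrArg Subtype.val hs
      split_ifs with h
      · rw [hGFr, hsr]; ring
      · rw [hsr]
  refine ⟨ψ, ⟨hmono.continuous_of_surjective hsurj, hmono, hψ0, hψ1⟩,
    funext fun t => (hfac t).symm⟩

/-- Factorization on the right: for reparametrizations `η, φ`, there is a
reparametrization `ψ` with `η = φ ∘ ψ` if and only if `C_φ ⊆ C_η`. -/
theorem exists_right_factor_iff_stopValues_subset
    (η φ : I → I) (hη : IsRepar η) (hφ : IsRepar φ) :
    (∃ ψ : I → I, IsRepar ψ ∧ η = φ ∘ ψ) ↔ StopValues φ ⊆ StopValues η := by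
  constructor
  · rintro ⟨ψ, hψ, heq⟩ c hc
    rw [stopValues_char hφ] at hc
    rw [stopValues_char hη]
    obtain ⟨t₁, ht₁⟩ := repar_surjective hψ (lv φ c)
    obtain ⟨t₂, ht₂⟩ := repar_surjective hψ (uv φ c)
    have hη₁ : η t₁ = c := by
      rw [heq]; show φ (ψ t₁) = c; rw [ht₁, lv_spec hφ]
    have hη₂ : η t₂ = c := by
      rw [heq]; show φ (ψ t₂) = c; rw [ht₂, uv_spec hφ]
    have h12 : t₁ < t₂ := by
      by_contra hle
      push_neg at hle
      have := hψ.2.1 hle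
      rw [ht₁, ht₂] at this
      exact absurd this (not_le.2 hc)
    exact lt_of_le_of_lt (lv_le hη₁) (lt_of_lt_of_le h12 (le_uv hη₂))
  · intro hsub
    exact backward hη hφ (fun c h =>
      (stopValues_char hη c).1 (hsub ((stopValues_char hφ c).2 h)))
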